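/- Let Ω ⊂ ℝ^N be bounded open of class C², K as above, d_Ω the Minkowski distance to ∂Ω associated to ρ⁰ = ρ_{K⁰}, and d_Ω⁻ the distance associated to the gauge of −K⁰. Then every u ∈ Lip_ρ(Ω) with u = 0 on ∂Ω satisfies −d_Ω⁻(x) ≤ u(x) ≤ d_Ω(x) for all x ∈ Ω. Moreover, if u ∈ Lip_ρ(Ω) with u ≥ 0 on ∂Ω then u ≥ −d_Ω⁻, and if u ≤ 0 on ∂Ω then u ≤ d_Ω. -/

import Mathlib

open MeasureTheory Set RealInnerProductSpace
open scoped NNReal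

/-- The polar set `K⁰ = {p : ⟪p,x⟫ ≤ 1 ∀ x ∈ K}`. -/
def polarSet {N : ℕ} (K : Set (EuclideanSpace ℝ (Fin N))) : Set (EuclideanSpace ℝ (Fin N)) :=
  {p | ∀ x ∈ K, ⟪p, x⟫ ≤ 1}

/-- `Ω` is a domain of class `C²`. -/
def IsC2Domain {N : ℕ} (Ω : Set (EuclideanSpace ℝ (Fin N))) : Prop :=
  ∀ x ∈ frontier Ω, ∃ (U : Set (EuclideanSpace ℝ (Fin N))) (f : EuclideanSpace ℝ (Fin N) → ℝ),
    x ∈ U ∧ IsOpen U ∧ ContDiffOn ℝ 2 f U ∧ (∀ y ∈ U, fderivWithin ℝ f U y ≠ 0) ∧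
    Ω ∩ U = {y ∈ U | f y < 0}

/-- The Minkowski distance from `∂Ω` induced by the gauge of `K⁰`. -/
noncomputable def mdist {N : ℕ} (K Ω : Set (EuclideanSpace ℝ (Fin N)))
    (x : EuclideanSpace ℝ (Fin N)) : ℝ :=
  sInf ((fun y => gauge (polarSet K) (x - y)) '' frontier Ω)

/-- The Minkowski distance from `∂Ω` induced by the gauge of `−K⁰`
(note `ρ_{-K⁰}(x−y) = ρ_{K⁰}(y−x)`). -/
noncomputable def mdistNeg {N : ℕ} (K Ω : Set (EuclideanSpace ℝ (Fin N)))
    (x : EuclideanSpace ℝ (Fin N)) : ℝ :=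
  sInf ((fun y => gauge (polarSet K) (y - x)) '' frontier Ω)


open Filter
open scoped Topology Pointwise

lemma inner_le_gauge_polar {N : ℕ} {K : Set (EuclideanSpace ℝ (Fin N))}
    (hK : Bornology.IsBounded K) {p : EuclideanSpace ℝ (Fin N)} (hp : p ∈ K)
    (v : EuclideanSpace ℝ (Fin N)) : ⟪p, v⟫ ≤ gauge (polarSet K) v := by
  obtain ⟨R, hR⟩ := hK.subset_closedBall 0
  set R₁ : ℝ := max R 0 with hR₁def
  have hR₁0 : 0 ≤ R₁ := le_max_right _ _
  set r₀ : ℝ := ‖v‖ * R₁ + 1 with hr₀def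
  have hr₀pos : 0 < r₀ := by positivity
  have hxle : ∀ x ∈ K, ⟪v, x⟫ ≤ r₀ := by
    intro x hx
    have h1 : ⟪v, x⟫ ≤ ‖v‖ * ‖x‖ := real_inner_le_norm v x
    have h2 : ‖x‖ ≤ R₁ := le_trans (by simpa using hR hx) (le_max_left _ _)
    nlinarith [norm_nonneg v]
  have hne : {r : ℝ | 0 < r ∧ v ∈ r • polarSet K}.Nonempty := by
    refine ⟨r₀, hr₀pos, ?_⟩
    rw [mem_smul_set_iff_inv_smul_mem₀ hr₀pos.ne']
    intro x hx
    rw [real_inner_smul_left]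
    calc r₀⁻¹ * ⟪v, x⟫ ≤ r₀⁻¹ * r₀ :=
          mul_le_mul_of_nonneg_left (hxle x hx) (by positivity)
      _ = 1 := inv_mul_cancel₀ hr₀pos.ne'
  show ⟪p, v⟫ ≤ sInf {r : ℝ | 0 < r ∧ v ∈ r • polarSet K}
  refine le_csInf hne ?_
  rintro r ⟨hrpos, q, hq, rfl⟩
  have h1 : ⟪q, p⟫ ≤ 1 := hq p hp
  rw [real_inner_smul_right, real_inner_comm]
  nlinarith

lemma tendsto_slope_seq {F : ℝ → ℝ} {s d : ℝ} (hF : HasDerivAt F d s) :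
    Tendsto (fun n : ℕ => (F (s + 1 / ((n : ℝ) + 1)) - F s) / (1 / ((n : ℝ) + 1)))
      atTop (𝓝 d) := by
  have h1 := hasDerivAt_iff_tendsto_slope.1 hF
  have h2 : Tendsto (fun n : ℕ => s + 1 / ((n : ℝ) + 1)) atTop (𝓝[≠] s) := by
    apply tendsto_nhdsWithin_of_tendsto_nhds_of_eventually_within
    · simpa using tendsto_const_nhds.add (tendsto_one_div_add_atTop_nhds_zero_nat (𝕜 := ℝ))
    · filter_upwards with n
      have hp : 0 < 1 / ((n : ℝ) + 1) := by positivity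
      simp only [mem_compl_iff, mem_singleton_iff]
      intro h
      nlinarith [add_left_cancel (a := s) (b := 1 / ((n : ℝ) + 1)) (c := 0) (by linarith)]
  have h3 := h1.comp h2
  refine h3.congr fun n => ?_
  simp only [Function.comp_apply, slope_def_field]
  congr 1
  ring

lemma lipschitz_sub_le_of_ae_deriv_le {g : ℝ → ℝ} {L : ℝ≥0} (hg : LipschitzWith L g)
    {c : ℝ} {T : Set ℝ} (hT : volume T = 0)
    (hd : ∀ t, t ∈ Icc (0:ℝ) 1 → t ∉ T → ∃ d, HasDerivAt g d t ∧ d ≤ c) :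
    g 1 - g 0 ≤ c := by
  have hgc : Continuous g := hg.continuous
  -- derivative is bounded by L everywhere (junk value 0 otherwise)
  have hfb : ∀ t, |deriv g t| ≤ (L : ℝ) := by
    intro t
    by_cases h : DifferentiableAt ℝ g t
    · have h1 : ‖fderiv ℝ g t‖ ≤ (L : ℝ) := norm_fderiv_le_of_lipschitz ℝ hg
      have h2 : deriv g t = fderiv ℝ g t 1 := by
        rw [← derivWithin_univ, ← fderivWithin_univ, derivWithin]
      rw [h2]
      calc |fderiv ℝ g t 1| = ‖fderiv ℝ g t 1‖ := rfl
        _ ≤ ‖fderiv ℝ g t‖ * ‖(1:ℝ)‖ := (fderiv ℝ g t).le_opNorm 1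
        _ ≤ (L : ℝ) := by simpa using h1
    · rw [deriv_zero_of_not_differentiableAt h]
      simpa using L.2
  have hmeas : Measurable (deriv g) := measurable_deriv g
  set μ := volume.restrict (Icc (0:ℝ) 1) with hμ
  have hconst : Integrable (fun _ : ℝ => (L : ℝ)) μ :=
    integrableOn_const (by rw [Real.volume_Icc]; norm_num)
  have hInt : Integrable (deriv g) μ :=
    Integrable.mono' hconst hmeas.aestronglyMeasurable
      (Filter.Eventually.of_forall fun t => by simpa using hfb t)
  -- difference quotients
  set q : ℕ → ℝ → ℝ := fun n t => (g (t + 1 / ((n : ℝ) + 1)) - g t) / (1 / ((n : ℝ) + 1))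
    with hq
  have hqc : ∀ n, Continuous (q n) :=
    fun n => ((hgc.comp (continuous_id.add continuous_const)).sub hgc).div_const _
  have hqb : ∀ n t, |q n t| ≤ (L : ℝ) := by
    intro n t
    have hp : 0 < 1 / ((n : ℝ) + 1) := by positivity
    rw [abs_div, abs_of_pos hp, div_le_iff₀ hp]
    have := hg.dist_le_mul (t + 1 / ((n : ℝ) + 1)) t
    rw [Real.dist_eq, Real.dist_eq] at this
    simpa [abs_of_pos (show (0:ℝ) < ((n:ℝ)+1)⁻¹ by positivity)] using this
  -- a.e. convergence to deriv g
  have hae : ∀ᵐ t ∂μ, Tendsto (fun n => q n t) atTop (𝓝 (deriv g t)) := by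
    have h1 : ∀ᵐ t ∂μ, t ∈ Icc (0:ℝ) 1 := ae_restrict_mem measurableSet_Icc
    have h2 : ∀ᵐ t ∂μ, t ∉ T := by
      have : μ T = 0 := le_antisymm (le_trans (Measure.restrict_le_self _) hT.le) (zero_le)
      exact (measure_eq_zero_iff_ae_notMem (μ := μ)).1 this
    filter_upwards [h1, h2] with t ht hnt
    obtain ⟨d, hdd, _⟩ := hd t ht hnt
    rw [hdd.deriv]
    exact tendsto_slope_seq hdd
  have hDCT : Tendsto (fun n => ∫ t, q n t ∂μ) atTop (𝓝 (∫ t, deriv g t ∂μ)) :=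
    tendsto_integral_of_dominated_convergence _ (fun n => (hqc n).aestronglyMeasurable)
      hconst (fun n => Filter.Eventually.of_forall fun t => by simpa using hqb n t) hae
  -- compute the integrals of the difference quotients
  have hgInt : ∀ a b : ℝ, IntervalIntegrable g volume a b := fun a b => hgc.intervalIntegrable a b
  have hval : ∀ n, ∫ t, q n t ∂μ =
      ((∫ t in (1:ℝ)..(1 + 1 / ((n : ℝ) + 1)), g t) - ∫ t in (0:ℝ)..(1 / ((n : ℝ) + 1)), g t) /
        (1 / ((n : ℝ) + 1)) := by
    intro n
    set h : ℝ := 1 / ((n : ℝ) + 1) with hh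
    have h1 : ∫ t, q n t ∂μ = ∫ t in (0:ℝ)..1, q n t := by
      rw [intervalIntegral.integral_of_le zero_le_one, hμ,
        ← integral_Icc_eq_integral_Ioc]
    rw [h1, hq]
    simp only
    rw [intervalIntegral.integral_div]
    congr 1
    have hI1 : IntervalIntegrable (fun t : ℝ => g (t + h)) volume 0 1 :=
      Continuous.intervalIntegrable (by fun_prop) 0 1
    rw [intervalIntegral.integral_sub hI1 (hgInt 0 1)]
    have h2 : ∫ t in (0:ℝ)..1, g (t + h) = ∫ t in (0+h)..(1+h), g t :=
      intervalIntegral.integral_comp_add_right g h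
    rw [h2, zero_add]
    have h3 : (∫ t in h..1, g t) + ∫ t in (1:ℝ)..(1+h), g t = ∫ t in h..(1+h), g t :=
      intervalIntegral.integral_add_adjacent_intervals (hgInt _ _) (hgInt _ _)
    have h4 : (∫ t in (0:ℝ)..h, g t) + ∫ t in h..(1:ℝ), g t = ∫ t in (0:ℝ)..1, g t :=
      intervalIntegral.integral_add_adjacent_intervals (hgInt _ _) (hgInt _ _)
    linarith
  -- limit of those integrals is g 1 - g 0
  have hlim : Tendsto (fun n => ∫ t, q n t ∂μ) atTop (𝓝 (g 1 - g 0)) := by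
    have hF1 : HasDerivAt (fun x => ∫ t in (1:ℝ)..x, g t) (g 1) 1 :=
      intervalIntegral.integral_hasDerivAt_right (hgInt 1 1)
        (hgc.stronglyMeasurableAtFilter _ _) hgc.continuousAt
    have hF0 : HasDerivAt (fun x => ∫ t in (0:ℝ)..x, g t) (g 0) 0 :=
      intervalIntegral.integral_hasDerivAt_right (hgInt 0 0)
        (hgc.stronglyMeasurableAtFilter _ _) hgc.continuousAt
    have t1 := tendsto_slope_seq hF1
    have t0 := tendsto_slope_seq hF0
    simp only [intervalIntegral.integral_same, sub_zero, zero_add] at t1 t0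
    have := t1.sub t0
    refine Tendsto.congr (fun n => ?_) this
    rw [hval n, sub_div]
  have heq : ∫ t, deriv g t ∂μ = g 1 - g 0 := tendsto_nhds_unique hDCT hlim
  -- conclude
  have hle : ∫ t, deriv g t ∂μ ≤ ∫ _, c ∂μ := by
    refine integral_mono_ae hInt (integrable_const c) ?_
    have h1 : ∀ᵐ t ∂μ, t ∈ Icc (0:ℝ) 1 := ae_restrict_mem measurableSet_Icc
    have h2 : ∀ᵐ t ∂μ, t ∉ T := by
      have : μ T = 0 := le_antisymm (le_trans (Measure.restrict_le_self _) hT.le) (zero_le)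
      exact (measure_eq_zero_iff_ae_notMem (μ := μ)).1 this
    filter_upwards [h1, h2] with t ht hnt
    obtain ⟨d, hdd, hdc⟩ := hd t ht hnt
    rw [hdd.deriv]; exact hdc
  rw [heq] at hle
  calc g 1 - g 0 ≤ ∫ _, c ∂μ := hle
    _ = c := by
      rw [hμ, setIntegral_const, Real.volume_real_Icc]
      norm_num

lemma seg_est {N : ℕ} {K : Set (EuclideanSpace ℝ (Fin N))} (hKb : Bornology.IsBounded K)
    {Ω : Set (EuclideanSpace ℝ (Fin N))} (hΩopen : IsOpen Ω)
    {w : EuclideanSpace ℝ (Fin N) → ℝ} {C : ℝ≥0} (hlip : LipschitzWith C w)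
    (hbad : volume {z | z ∈ Ω ∧ ¬(DifferentiableAt ℝ w z ∧ gradient w z ∈ K)} = 0)
    {a b : EuclideanSpace ℝ (Fin N)}
    (hseg : ∀ t ∈ Icc (0:ℝ) 1, a + t • (b - a) ∈ Ω) :
    w b - w a ≤ gauge (polarSet K) (b - a) := by
  classical
  set v : EuclideanSpace ℝ (Fin N) := b - a with hv
  set c : ℝ := gauge (polarSet K) (b - a) with hc
  have hScomp : IsCompact ((fun t : ℝ => a + t • v) '' Icc 0 1) :=
    (isCompact_Icc).image (by fun_prop)
  obtain ⟨δ, hδpos, hδ⟩ := hScomp.exists_thickening_subset_open hΩopen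
    (by rintro _ ⟨t, ht, rfl⟩; exact hseg t ht)
  set A : Set (EuclideanSpace ℝ (Fin N)) :=
    {z | z ∈ Ω ∧ ¬(DifferentiableAt ℝ w z ∧ gradient w z ∈ K)} with hA
  set B : Set (EuclideanSpace ℝ (Fin N)) := toMeasurable volume A with hB
  have hBmeas : MeasurableSet B := measurableSet_toMeasurable _ _
  have hBnull : volume B = 0 := by rw [hB, measure_toMeasurable]; exact hbad
  have hAB : A ⊆ B := subset_toMeasurable _ _
  -- per-line estimate
  have line : ∀ y : EuclideanSpace ℝ (Fin N), (∀ t ∈ Icc (0:ℝ) 1, y + t • v ∈ Ω) →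
      volume {t : ℝ | y + t • v ∈ B} = 0 → w (y + v) - w y ≤ c := by
    intro y hy hnull
    set g : ℝ → ℝ := fun t => w (y + t • v) with hg
    have hℓ : LipschitzWith ‖v‖₊ (fun t : ℝ => y + t • v) := by
      apply LipschitzWith.of_dist_le_mul
      intro s t
      have h1 : (y + s • v) - (y + t • v) = (s - t) • v := by
        rw [sub_smul]; abel
      rw [dist_eq_norm, h1, norm_smul, dist_eq_norm]
      simp [mul_comm]
    have hglip : LipschitzWith (C * ‖v‖₊) g := hlip.comp hℓ
    have h01 : g 1 - g 0 ≤ c := by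
      apply lipschitz_sub_le_of_ae_deriv_le hglip hnull
      intro t ht hnt
      have hpΩ : y + t • v ∈ Ω := hy t ht
      have hpA : y + t • v ∉ A := fun h => hnt (hAB h)
      have hp : DifferentiableAt ℝ w (y + t • v) ∧ gradient w (y + t • v) ∈ K := by
        by_contra h
        exact hpA ⟨hpΩ, h⟩
      obtain ⟨hdiff, hgradK⟩ := hp
      refine ⟨⟪gradient w (y + t • v), v⟫, ?_, ?_⟩
      · have hlin : HasDerivAt (fun s : ℝ => y + s • v) v t := by
          simpa using ((hasDerivAt_id t).smul_const v).const_add y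
        have hgr : HasGradientAt w (gradient w (y + t • v)) (y + t • v) :=
          hdiff.hasGradientAt
        have hF : HasFDerivAt w
            (InnerProductSpace.toDual ℝ (EuclideanSpace ℝ (Fin N)) (gradient w (y + t • v)))
            (y + t • v) := hasGradientAt_iff_hasFDerivAt.1 hgr
        have := hF.comp_hasDerivAt t hlin
        simpa [InnerProductSpace.toDual_apply_apply, hg, Function.comp_def] using this
      · exact inner_le_gauge_polar hKb hgradK v
    simpa [hg, one_smul] using h01
  -- Fubini
  have fub : ∀ᵐ y : EuclideanSpace ℝ (Fin N), volume {t : ℝ | (a + y) + t • v ∈ B} = 0 := by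
    set G : EuclideanSpace ℝ (Fin N) × ℝ → EuclideanSpace ℝ (Fin N) :=
      fun p => (a + p.1) + p.2 • v with hG
    have hGmeas : Measurable G := by fun_prop
    have hprod : (volume.prod volume) (G ⁻¹' B) = 0 := by
      rw [Measure.prod_apply_symm (hGmeas hBmeas)]
      have hslice : ∀ t : ℝ,
          volume ((fun y : EuclideanSpace ℝ (Fin N) => (y, t)) ⁻¹' (G ⁻¹' B)) = 0 := by
        intro t
        have h1 : ((fun y : EuclideanSpace ℝ (Fin N) => (y, t)) ⁻¹' (G ⁻¹' B)) =
            (fun y : EuclideanSpace ℝ (Fin N) => y + (a + t • v)) ⁻¹' B := by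
          ext z
          have h2 : a + z + t • v = z + (a + t • v) := by abel
          show a + z + t • v ∈ B ↔ z + (a + t • v) ∈ B
          rw [h2]
        rw [h1, measure_preimage_add_right]
        exact hBnull
      simp only [hslice]
      simp
    have h3 := Measure.measure_ae_null_of_prod_null hprod
    filter_upwards [h3] with y hy
    exact hy
  -- pick a good small translate
  have main : ∀ η > 0, w b - w a ≤ c + η := by
    intro η hη
    set ε : ℝ := min δ (η / (2 * C + 1)) with hε
    have hεpos : 0 < ε := lt_min hδpos (by positivity)
    have hball : 0 < volume (Metric.ball (0 : EuclideanSpace ℝ (Fin N)) ε) :=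
      Metric.measure_ball_pos _ _ hεpos
    have hex : ∃ y ∈ Metric.ball (0 : EuclideanSpace ℝ (Fin N)) ε,
        volume {t : ℝ | (a + y) + t • v ∈ B} = 0 := by
      by_contra h
      push_neg at h
      have hsub : Metric.ball (0 : EuclideanSpace ℝ (Fin N)) ε ⊆
          {y | ¬ volume {t : ℝ | (a + y) + t • v ∈ B} = 0} := fun y hy => h y hy
      exact absurd (measure_mono_null hsub fub) hball.ne'
    obtain ⟨y, hyball, hynull⟩ := hex
    have hyε : ‖y‖ < ε := by simpa [Metric.mem_ball, dist_eq_norm] using hyball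
    have hymem : ∀ t ∈ Icc (0:ℝ) 1, (a + y) + t • v ∈ Ω := by
      intro t ht
      apply hδ
      rw [Metric.mem_thickening_iff]
      refine ⟨a + t • v, ⟨t, ht, rfl⟩, ?_⟩
      have h4 : (a + y) + t • v = (a + t • v) + y := by abel
      rw [h4, dist_self_add_left]
      exact lt_of_lt_of_le hyε (min_le_left _ _)
    have hest := line (a + y) hymem hynull
    have hba : (a + y) + v = b + y := by rw [hv]; abel
    rw [hba] at hest
    have h1 : |w b - w (b + y)| ≤ C * ‖y‖ := by
      have h5 := hlip.dist_le_mul b (b + y)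
      rw [Real.dist_eq] at h5
      calc |w b - w (b + y)| ≤ (C : ℝ) * dist b (b + y) := h5
        _ = C * ‖y‖ := by rw [dist_self_add_right]
    have h2 : |w (a + y) - w a| ≤ C * ‖y‖ := by
      have h5 := hlip.dist_le_mul (a + y) a
      rw [Real.dist_eq] at h5
      calc |w (a + y) - w a| ≤ (C : ℝ) * dist (a + y) a := h5
        _ = C * ‖y‖ := by rw [dist_self_add_left]
    have hεη : ε ≤ η / (2 * C + 1) := min_le_right _ _
    have hC0 : (0:ℝ) ≤ C := C.2
    have habs1 := abs_le.1 h1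
    have habs2 := abs_le.1 h2
    have hkey : 2 * (C:ℝ) * ‖y‖ ≤ η := by
      have h3 : ‖y‖ ≤ η / (2 * C + 1) := le_trans hyε.le hεη
      rw [le_div_iff₀ (by positivity : (0:ℝ) < 2*C+1)] at h3
      nlinarith [norm_nonneg y]
    linarith [habs1.2, habs2.2, hkey, hest]
  by_contra h
  push_neg at h
  have := main ((w b - w a - c) / 2) (by rw [hc]; linarith)
  rw [hc] at this
  linarith

lemma exit_est {N : ℕ} {K : Set (EuclideanSpace ℝ (Fin N))} (hKb : Bornology.IsBounded K)
    {Ω : Set (EuclideanSpace ℝ (Fin N))} (hΩopen : IsOpen Ω)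
    {w : EuclideanSpace ℝ (Fin N) → ℝ} {C : ℝ≥0} (hlip : LipschitzWith C w)
    (hbad : volume {z | z ∈ Ω ∧ ¬(DifferentiableAt ℝ w z ∧ gradient w z ∈ K)} = 0)
    {x y : EuclideanSpace ℝ (Fin N)} (hx : x ∈ Ω) (hy : y ∈ frontier Ω) :
    ∃ z ∈ frontier Ω, w x ≤ w z + gauge (polarSet K) (x - y) ∧
      w z - gauge (polarSet K) (y - x) ≤ w x := by
  classical
  set v : EuclideanSpace ℝ (Fin N) := y - x with hv
  set φ : ℝ → EuclideanSpace ℝ (Fin N) := fun t => x + t • v with hφ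
  have hφcont : Continuous φ := by fun_prop
  have hyΩ : y ∉ Ω := by
    rw [hΩopen.frontier_eq] at hy; exact hy.2
  set E' : Set ℝ := Icc (0:ℝ) 1 ∩ φ ⁻¹' Ωᶜ with hE'
  have h1E : (1:ℝ) ∈ E' := by
    constructor
    · exact ⟨zero_le_one, le_rfl⟩
    · show φ 1 ∈ Ωᶜ
      have : φ 1 = y := by rw [hφ]; simp [hv]
      rw [this]; exact hyΩ
  have hclosed : IsClosed E' :=
    isClosed_Icc.inter (hΩopen.isClosed_compl.preimage hφcont)
  have hne : E'.Nonempty := ⟨1, h1E⟩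
  have hbdd : BddBelow E' := ⟨0, fun t ht => ht.1.1⟩
  set t₀ : ℝ := sInf E' with ht₀
  have htE : t₀ ∈ E' := hclosed.csInf_mem hne hbdd
  have ht01 : t₀ ∈ Icc (0:ℝ) 1 := htE.1
  have hzΩ : φ t₀ ∉ Ω := htE.2
  have htpos : 0 < t₀ := by
    rcases lt_or_eq_of_le ht01.1 with h | h
    · exact h
    · exfalso; apply hzΩ; rw [← h, hφ]; simpa using hx
  have hmemlt : ∀ s : ℝ, 0 ≤ s → s < t₀ → φ s ∈ Ω := by
    intro s hs0 hst
    by_contra hns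
    have hsE : s ∈ E' := ⟨⟨hs0, le_of_lt (lt_of_lt_of_le hst ht01.2)⟩, hns⟩
    have := csInf_le hbdd hsE
    linarith
  -- approximating sequence from below
  set s : ℕ → ℝ := fun n => t₀ - t₀ * (1 / ((n:ℝ) + 1)) with hs
  have hs0 : ∀ n, 0 ≤ s n := by
    intro n
    have h1 : 1 / ((n:ℝ) + 1) ≤ 1 := by
      rw [div_le_one (by positivity)]; simp
    have h2 := mul_le_mul_of_nonneg_left h1 htpos.le
    rw [hs]; simp only; nlinarith
  have hslt : ∀ n, s n < t₀ := by
    intro n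
    have : 0 < t₀ * (1 / ((n:ℝ) + 1)) := by positivity
    rw [hs]; simp only; linarith
  have hstend : Filter.Tendsto s Filter.atTop (nhds t₀) := by
    have h1 : Filter.Tendsto (fun n : ℕ => t₀ * (1 / ((n:ℝ) + 1))) Filter.atTop (nhds 0) := by
      simpa using tendsto_one_div_add_atTop_nhds_zero_nat.const_mul t₀
    have h2 : Filter.Tendsto (fun n : ℕ => t₀ - t₀ * (1 / ((n:ℝ) + 1))) Filter.atTop
        (nhds (t₀ - 0)) := tendsto_const_nhds.sub h1
    rw [sub_zero] at h2
    exact h2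
  have hφtend : Filter.Tendsto (fun n => φ (s n)) Filter.atTop (nhds (φ t₀)) :=
    (hφcont.continuousAt.tendsto).comp hstend
  have hzfr : φ t₀ ∈ frontier Ω := by
    rw [hΩopen.frontier_eq]
    refine ⟨mem_closure_of_tendsto hφtend ?_, hzΩ⟩
    filter_upwards with n
    exact hmemlt (s n) (hs0 n) (hslt n)
  refine ⟨φ t₀, hzfr, ?_, ?_⟩
  · -- upper estimate
    have hstep : ∀ n : ℕ, w x ≤ w (φ (s n)) + gauge (polarSet K) (x - y) := by
      intro n
      have hseg : ∀ r ∈ Icc (0:ℝ) 1, φ (s n) + r • (x - φ (s n)) ∈ Ω := by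
        intro r hr
        have heq : φ (s n) + r • (x - φ (s n)) = φ ((1 - r) * s n) := by
          rw [hφ]; simp only; module
        rw [heq]
        refine hmemlt _ (by nlinarith [hs0 n, hr.1, hr.2]) ?_
        have h2 : (1 - r) * s n ≤ s n := by nlinarith [hs0 n, hr.1, hr.2]
        exact lt_of_le_of_lt h2 (hslt n)
      have h3 := seg_est hKb hΩopen hlip hbad hseg
      have h4 : x - φ (s n) = s n • (x - y) := by
        rw [hφ, hv]; simp only; module
      rw [h4, gauge_smul_of_nonneg (hs0 n), smul_eq_mul] at h3
      have h5 : s n * gauge (polarSet K) (x - y) ≤ gauge (polarSet K) (x - y) := by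
        have h6 := gauge_nonneg (s := polarSet K) (x - y)
        have h7 : s n ≤ 1 := le_trans (hslt n).le ht01.2
        nlinarith
      linarith
    have htend2 : Filter.Tendsto (fun n => w (φ (s n)) + gauge (polarSet K) (x - y))
        Filter.atTop (nhds (w (φ t₀) + gauge (polarSet K) (x - y))) :=
      (hlip.continuous.continuousAt.tendsto.comp hφtend).add_const _
    exact ge_of_tendsto' htend2 hstep
  · -- lower estimate
    have hstep : ∀ n : ℕ, w (φ (s n)) - gauge (polarSet K) (y - x) ≤ w x := by
      intro n
      have hseg : ∀ r ∈ Icc (0:ℝ) 1, x + r • (φ (s n) - x) ∈ Ω := by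
        intro r hr
        have heq : x + r • (φ (s n) - x) = φ (r * s n) := by
          rw [hφ]; simp only; module
        rw [heq]
        refine hmemlt _ (by nlinarith [hs0 n, hr.1]) ?_
        have h2 : r * s n ≤ s n := by nlinarith [hs0 n, hr.1, hr.2]
        exact lt_of_le_of_lt h2 (hslt n)
      have h3 := seg_est hKb hΩopen hlip hbad hseg
      have h4 : φ (s n) - x = s n • (y - x) := by
        rw [hφ, hv]; simp only; module
      rw [h4, gauge_smul_of_nonneg (hs0 n), smul_eq_mul] at h3
      have h5 : s n * gauge (polarSet K) (y - x) ≤ gauge (polarSet K) (y - x) := by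
        have h6 := gauge_nonneg (s := polarSet K) (y - x)
        have h7 : s n ≤ 1 := le_trans (hslt n).le ht01.2
        nlinarith
      linarith
    have htend2 : Filter.Tendsto (fun n => w (φ (s n)) - gauge (polarSet K) (y - x))
        Filter.atTop (nhds (w (φ t₀) - gauge (polarSet K) (y - x))) :=
      (hlip.continuous.continuousAt.tendsto.comp hφtend).sub_const _
    exact le_of_tendsto' htend2 hstep

lemma frontier_nonempty {N : ℕ} (hN : 0 < N) {Ω : Set (EuclideanSpace ℝ (Fin N))}
    (hΩbdd : Bornology.IsBounded Ω) (hΩne : Ω.Nonempty) : (frontier Ω).Nonempty := by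
  rw [nonempty_iff_ne_empty]
  intro hemp
  have hclopen : IsClopen Ω := isClopen_iff_frontier_eq_empty.2 hemp
  rcases isClopen_iff.1 hclopen with h | h
  · exact absurd h (nonempty_iff_ne_empty.1 hΩne)
  · obtain ⟨R, hR⟩ := hΩbdd.subset_closedBall 0
    set i : Fin N := ⟨0, hN⟩
    set z : EuclideanSpace ℝ (Fin N) := EuclideanSpace.single i (|R| + 1) with hz
    have hmem : z ∈ Ω := h ▸ mem_univ z
    have h1 : ‖z‖ ≤ R := by simpa using hR hmem
    have h2 : ‖z‖ = |R| + 1 := by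
      rw [hz, EuclideanSpace.norm_single]
      rw [Real.norm_eq_abs, abs_of_nonneg (by positivity)]
    rw [h2] at h1
    have := le_abs_self R
    linarith

/-- comparison with the Minkowski distances. Every `u ∈ Lip_ρ(Ω)` vanishing
on `∂Ω` satisfies `−d_Ω⁻ ≤ u ≤ d_Ω` in `Ω`; if `u ≥ 0` on `∂Ω` then `u ≥ −d_Ω⁻`, and if
`u ≤ 0` on `∂Ω` then `u ≤ d_Ω`. -/
theorem comparison_with_mdist (N : ℕ) (hN : 0 < N)
    (Ω : Set (EuclideanSpace ℝ (Fin N)))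
    (hΩopen : IsOpen Ω) (hΩbdd : Bornology.IsBounded Ω) (hΩne : Ω.Nonempty)
    (hΩC2 : IsC2Domain Ω)
    (K : Set (EuclideanSpace ℝ (Fin N)))
    (hKcomp : IsCompact K) (hKconv : Convex ℝ K)
    (hK0 : (0 : EuclideanSpace ℝ (Fin N)) ∈ interior K) :
    ∀ (u : EuclideanSpace ℝ (Fin N) → ℝ) (C : ℝ≥0),
      LipschitzOnWith C u (closure Ω) →
      (∀ᵐ x ∂(volume.restrict Ω), gradient u x ∈ K) →
      ((∀ y ∈ frontier Ω, u y = 0) →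
        ∀ x ∈ Ω, -mdistNeg K Ω x ≤ u x ∧ u x ≤ mdist K Ω x) ∧
      ((∀ y ∈ frontier Ω, 0 ≤ u y) → ∀ x ∈ Ω, -mdistNeg K Ω x ≤ u x) ∧
      ((∀ y ∈ frontier Ω, u y ≤ 0) → ∀ x ∈ Ω, u x ≤ mdist K Ω x) := by
  intro u C hlip hgrad
  obtain ⟨w, hwlip, hagree⟩ := hlip.extend_real
  have hKb : Bornology.IsBounded K := hKcomp.isBounded
  -- gradients agree on Ω
  have hgradeq : ∀ z ∈ Ω, gradient w z = gradient u z := by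
    intro z hz
    have heq : w =ᶠ[nhds z] u :=
      Filter.eventually_of_mem (hΩopen.mem_nhds hz)
        (fun y hy => (hagree (subset_closure hy)).symm)
    unfold gradient
    rw [heq.fderiv_eq]
  -- the bad set is null
  have hbad : volume {z | z ∈ Ω ∧ ¬(DifferentiableAt ℝ w z ∧ gradient w z ∈ K)} = 0 := by
    have hrad : ∀ᵐ z : EuclideanSpace ℝ (Fin N) ∂volume, DifferentiableAt ℝ w z :=
      hwlip.ae_differentiableAt
    have hS1 : volume {z : EuclideanSpace ℝ (Fin N) | ¬ DifferentiableAt ℝ w z} = 0 :=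
      ae_iff.1 hrad
    have hS2 : volume ({z : EuclideanSpace ℝ (Fin N) | ¬ gradient u z ∈ K} ∩ Ω) = 0 := by
      have h := ae_iff.1 hgrad
      rwa [Measure.restrict_apply' hΩopen.measurableSet] at h
    refine measure_mono_null ?_ (measure_union_null hS1 hS2)
    rintro z ⟨hzΩ, hn⟩
    by_cases hd : DifferentiableAt ℝ w z
    · right
      refine ⟨?_, hzΩ⟩
      intro hgr
      exact hn ⟨hd, (hgradeq z hzΩ) ▸ hgr⟩
    · left; exact hd
  have hfr : (frontier Ω).Nonempty := frontier_nonempty hN hΩbdd hΩne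
  have hfrcl : frontier Ω ⊆ closure Ω := frontier_subset_closure
  -- key two-sided estimate
  have key : ∀ x ∈ Ω, ∀ y ∈ frontier Ω, ∃ z ∈ frontier Ω,
      u x ≤ u z + gauge (polarSet K) (x - y) ∧
      u z - gauge (polarSet K) (y - x) ≤ u x := by
    intro x hx y hy
    obtain ⟨z, hz, h1, h2⟩ := exit_est hKb hΩopen hwlip hbad hx hy
    rw [← hagree (subset_closure hx), ← hagree (hfrcl hz)] at h1 h2
    exact ⟨z, hz, h1, h2⟩
  have upper : (∀ y ∈ frontier Ω, u y ≤ 0) → ∀ x ∈ Ω, u x ≤ mdist K Ω x := by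
    intro hb x hx
    refine le_csInf (hfr.image _) ?_
    rintro r ⟨y, hy, rfl⟩
    obtain ⟨z, hz, h1, _⟩ := key x hx y hy
    have := hb z hz
    simp only
    linarith
  have lower : (∀ y ∈ frontier Ω, 0 ≤ u y) → ∀ x ∈ Ω, -mdistNeg K Ω x ≤ u x := by
    intro hb x hx
    rw [mdistNeg, neg_le]
    refine le_csInf (hfr.image _) ?_
    rintro r ⟨y, hy, rfl⟩
    obtain ⟨z, hz, _, h2⟩ := key x hx y hy
    have := hb z hz
    simp only
    linarith
  exact ⟨fun h0 x hx => ⟨lower (fun y hy => (h0 y hy).ge) x hx,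
      upper (fun y hy => (h0 y hy).le) x hx⟩, lower, upper⟩
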